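/- Let R be a unital algebra over ℂ, λ ∈ ℂ nonzero, and V, W commuting invertible elements of R. Let x, y ∈ R and n₁, n₂, n₁', n₂' ∈ ℤ be such that V x = λ^{n₁} x V, W x = λ^{n₂} x W, V y = λ^{n₁'} y V, and W y = λ^{n₂'} y W. Define l(x) := x V^{n₂} and r(y) := W^{n₁'} y. Then l(x) r(y) − r(y) l(x) = λ^{n₁'(n₂ + n₂')} (x y − y x) V^{n₂} W^{n₁'}. In particular, if x and y commute then l(x) and r(y) commute. -/

import Mathlib

lemma twist_zpow_comm {R : Type*} [Ring R] [Algebra ℂ R] (c : ℂ) (hc : c ≠ 0)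
    (U : Rˣ) (x : R) (h : (U : R) * x = c • (x * (U : R))) :
    ∀ m : ℤ, ((U ^ m : Rˣ) : R) * x = c ^ m • (x * ((U ^ m : Rˣ) : R)) := by
  have hinv : ((U⁻¹ : Rˣ) : R) * x = c⁻¹ • (x * ((U⁻¹ : Rˣ) : R)) := by
    have h2 : x * (U : R) = c⁻¹ • ((U : R) * x) := by
      rw [h, smul_smul, inv_mul_cancel₀ hc, one_smul]
    calc ((U⁻¹ : Rˣ) : R) * x
        = ((U⁻¹ : Rˣ) : R) * (x * (U : R)) * ((U⁻¹ : Rˣ) : R) := by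
          rw [mul_assoc, mul_assoc, Units.mul_inv, mul_one]
      _ = c⁻¹ • (x * ((U⁻¹ : Rˣ) : R)) := by
          rw [h2, mul_smul_comm, smul_mul_assoc, ← mul_assoc, Units.inv_mul, one_mul]
  intro m
  induction m using Int.induction_on with
  | zero => simp
  | succ k ih =>
      have : (U ^ ((k : ℤ) + 1) : Rˣ) = U ^ (k : ℤ) * U := by rw [zpow_add_one]
      rw [this, Units.val_mul, mul_assoc, h, mul_smul_comm, ← mul_assoc, ih,
        smul_mul_assoc, smul_smul, mul_assoc, zpow_add_one₀ hc, mul_comm c]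
  | pred k ih =>
      have : (U ^ (-(k : ℤ) - 1) : Rˣ) = U ^ (-(k : ℤ)) * U⁻¹ := by
        rw [← zpow_neg_one, ← zpow_add, sub_eq_add_neg]
      rw [this, Units.val_mul, mul_assoc, hinv, mul_smul_comm, ← mul_assoc, ih,
        smul_mul_assoc, smul_smul, mul_assoc, zpow_sub_one₀ hc, mul_comm _ c⁻¹]

theorem left_right_twist_commutator
    (R : Type*) [Ring R] [Algebra ℂ R] (lam : ℂ) (hlam : lam ≠ 0)
    (V W : Rˣ) (hVW : Commute (V : R) (W : R))
    (x y : R) (n₁ n₂ n₁' n₂' : ℤ)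
    (hVx : (V : R) * x = lam ^ n₁ • (x * (V : R)))
    (hWx : (W : R) * x = lam ^ n₂ • (x * (W : R)))
    (hVy : (V : R) * y = lam ^ n₁' • (y * (V : R)))
    (hWy : (W : R) * y = lam ^ n₂' • (y * (W : R))) :
    (x * ((V ^ n₂ : Rˣ) : R)) * (((W ^ n₁' : Rˣ) : R) * y)
        - (((W ^ n₁' : Rˣ) : R) * y) * (x * ((V ^ n₂ : Rˣ) : R))
      = lam ^ (n₁' * (n₂ + n₂')) •
          ((x * y - y * x) * (((V ^ n₂ : Rˣ) : R) * ((W ^ n₁' : Rˣ) : R))) ∧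
    (x * y = y * x →
      (x * ((V ^ n₂ : Rˣ) : R)) * (((W ^ n₁' : Rˣ) : R) * y)
        = (((W ^ n₁' : Rˣ) : R) * y) * (x * ((V ^ n₂ : Rˣ) : R))) := by
  set a : R := ((V ^ n₂ : Rˣ) : R) with ha
  set b : R := ((W ^ n₁' : Rˣ) : R) with hb
  have hay : a * y = (lam ^ n₁') ^ n₂ • (y * a) :=
    twist_zpow_comm _ (zpow_ne_zero _ hlam) V y hVy n₂
  have hby : b * y = (lam ^ n₂') ^ n₁' • (y * b) :=
    twist_zpow_comm _ (zpow_ne_zero _ hlam) W y hWy n₁'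
  have hbx : b * x = (lam ^ n₂) ^ n₁' • (x * b) :=
    twist_zpow_comm _ (zpow_ne_zero _ hlam) W x hWx n₁'
  have hVWu : Commute V W := Units.ext (by exact hVW)
  have hab : Commute a b := by
    have := (hVWu.zpow_zpow n₂ n₁')
    simpa [ha, hb, Commute, SemiconjBy] using congrArg (Units.val) this
  have key1 : (x * a) * (b * y)
      = (lam ^ (n₂' * n₁') * lam ^ (n₁' * n₂)) • ((x * y) * (a * b)) := by
    rw [mul_assoc, hby, mul_smul_comm, mul_smul_comm, ← mul_assoc a y b, hay,
      smul_mul_assoc, mul_smul_comm, smul_smul, mul_assoc y a b, ← mul_assoc x y (a * b),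
      ← zpow_mul, ← zpow_mul]
  have key2 : (b * y) * (x * a)
      = (lam ^ (n₂' * n₁') * lam ^ (n₁' * n₂)) • ((y * x) * (a * b)) := by
    rw [hby, smul_mul_assoc, mul_assoc y b (x * a), ← mul_assoc b x a, hbx,
      smul_mul_assoc, mul_smul_comm, smul_smul, mul_assoc x b a, ← hab.eq,
      ← mul_assoc y x (a * b), ← zpow_mul, ← zpow_mul]
    ring_nf
  have hexp : lam ^ (n₂' * n₁') * lam ^ (n₁' * n₂) = lam ^ (n₁' * (n₂ + n₂')) := by
    rw [← zpow_add₀ hlam]; ring_nf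
  constructor
  · rw [key1, key2, ← smul_sub, ← sub_mul, hexp]
  · intro hcomm
    rw [key1, key2, hcomm]
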